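/- Let M ∈ ℝ^{n×n}, A ∈ ℝ^{k×n}, C ∈ ℝ^{p×n} be such that the rows of the stacked matrix [A; C] are linearly independent, and suppose ⟨Md,d⟩ > 0 for every nonzero d ∈ ker A. Let ω = diag(ω₁,…,ω_p) with ω_i ∈ [0,1] for every i. Then the block matrix [[M, Aᵀ, Cᵀω],[A, 0, 0],[C, 0, ω − I_p]] of size n+k+p is nonsingular. -/

import Mathlib

open Matrix

/-- If the rows of `[A; C]` are linearly independent, `⟨Md,d⟩ > 0`
for every nonzero `d ∈ ker A`, and `ω = diag(ω₁,…,ω_p)` with `ωᵢ ∈ [0,1]`, then the block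
matrix `[[M, Aᵀ, Cᵀω],[A,0,0],[C,0,ω−I]]` is nonsingular. -/
theorem stmt_10 {n k p : ℕ} (M : Matrix (Fin n) (Fin n) ℝ) (A : Matrix (Fin k) (Fin n) ℝ)
    (C : Matrix (Fin p) (Fin n) ℝ) (w : Fin p → ℝ)
    (hLI : LinearIndependent ℝ (Sum.elim (fun i => A i) (fun i => C i)))
    (hM : ∀ d : Fin n → ℝ, d ≠ 0 → A *ᵥ d = 0 → 0 < d ⬝ᵥ M *ᵥ d)
    (hw : ∀ i, w i ∈ Set.Icc (0:ℝ) 1) :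
    IsUnit (Matrix.fromBlocks M (Matrix.fromCols Aᵀ (Cᵀ * Matrix.diagonal w))
      (Matrix.fromRows A C) (Matrix.fromBlocks 0 0 0 (Matrix.diagonal w - 1))) := by
  rw [← Matrix.mulVec_injective_iff_isUnit]
  have key : ∀ v : Fin n ⊕ (Fin k ⊕ Fin p) → ℝ,
      (Matrix.fromBlocks M (Matrix.fromCols Aᵀ (Cᵀ * Matrix.diagonal w))
        (Matrix.fromRows A C) (Matrix.fromBlocks 0 0 0 (Matrix.diagonal w - 1))) *ᵥ v = 0 →
      v = 0 := by
    intro v hv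
    set x : Fin n → ℝ := v ∘ Sum.inl with hx
    set y : Fin k → ℝ := v ∘ Sum.inr ∘ Sum.inl with hy
    set z : Fin p → ℝ := v ∘ Sum.inr ∘ Sum.inr with hz
    have hvinr : v ∘ Sum.inr = Sum.elim y z := by
      funext i; cases i <;> rfl
    rw [Matrix.fromBlocks_mulVec, hvinr, ← hx] at hv
    -- the three block equations
    have E1 : M *ᵥ x + (Aᵀ *ᵥ y + Cᵀ *ᵥ (Matrix.diagonal w *ᵥ z)) = 0 := by
      funext j
      have h := congrFun hv (Sum.inl j)
      simpa [Matrix.fromCols_mulVec_sumElim, Matrix.mulVec_mulVec] using h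
    have E2 : A *ᵥ x = 0 := by
      funext i
      have h := congrFun hv (Sum.inr (Sum.inl i))
      simpa [Matrix.fromBlocks_mulVec] using h
    have E3 : ∀ i, (C *ᵥ x) i + (w i - 1) * z i = 0 := by
      intro i
      have h := congrFun hv (Sum.inr (Sum.inr i))
      simpa [Matrix.fromBlocks_mulVec, Matrix.sub_mulVec, Matrix.mulVec_diagonal,
        sub_mul] using h
    -- dot with x
    have hdot : x ⬝ᵥ (M *ᵥ x) + ∑ i, (C *ᵥ x) i * (w i * z i) = 0 := by
      have h0 : x ⬝ᵥ (M *ᵥ x + (Aᵀ *ᵥ y + Cᵀ *ᵥ (Matrix.diagonal w *ᵥ z))) = 0 := by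
        rw [E1, dotProduct_zero]
      rw [dotProduct_add, dotProduct_add, Matrix.dotProduct_mulVec x Aᵀ,
        Matrix.vecMul_transpose, E2, zero_dotProduct, zero_add,
        Matrix.dotProduct_mulVec x Cᵀ, Matrix.vecMul_transpose] at h0
      have h1 : (C *ᵥ x) ⬝ᵥ (Matrix.diagonal w *ᵥ z) = ∑ i, (C *ᵥ x) i * (w i * z i) := by
        unfold dotProduct
        exact Finset.sum_congr rfl fun i _ => by rw [Matrix.mulVec_diagonal]
      rw [h1] at h0
      exact h0
    have hsum : ∑ i, (C *ᵥ x) i * (w i * z i) = ∑ i, (1 - w i) * w i * (z i)^2 := by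
      apply Finset.sum_congr rfl
      intro i _
      have hCx : (C *ᵥ x) i = (1 - w i) * z i := by nlinarith [E3 i]
      rw [hCx]; ring
    have hsum_nonneg : 0 ≤ ∑ i, (1 - w i) * w i * (z i)^2 := by
      apply Finset.sum_nonneg
      intro i _
      have h1 := (hw i).1
      have h2 := (hw i).2
      have : (0:ℝ) ≤ 1 - w i := by linarith
      exact mul_nonneg (mul_nonneg this h1) (sq_nonneg _)
    -- x = 0
    have hx0 : x = 0 := by
      by_contra hxne
      have := hM x hxne E2
      rw [hsum] at hdot
      nlinarith
    have E3' : ∀ i, (w i - 1) * z i = 0 := by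
      intro i
      have := E3 i
      rw [hx0] at this
      simpa using this
    have E1' : Aᵀ *ᵥ y + Cᵀ *ᵥ (Matrix.diagonal w *ᵥ z) = 0 := by
      rw [hx0] at E1
      simpa using E1
    have hdz : Matrix.diagonal w *ᵥ z = fun i => w i * z i := by
      funext i; exact Matrix.mulVec_diagonal w z i
    rw [hdz] at E1'
    have hg : ∀ s : Fin k ⊕ Fin p, Sum.elim y (fun i => w i * z i) s = 0 := by
      apply Fintype.linearIndependent_iff.mp hLI (Sum.elim y (fun i => w i * z i))
      funext j
      have h := congrFun E1' j
      simp only [Finset.sum_apply, Pi.smul_apply, smul_eq_mul, Fintype.sum_sum_type,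
        Sum.elim_inl, Sum.elim_inr, Pi.zero_apply]
      simp only [Pi.add_apply, Matrix.mulVec, dotProduct, Matrix.transpose_apply,
        Pi.zero_apply] at h
      rw [← h]
      congr 1 <;> exact Finset.sum_congr rfl fun i _ => by ring
    have hy0 : ∀ i, y i = 0 := fun i => hg (Sum.inl i)
    have hz0 : ∀ i, z i = 0 := by
      intro i
      have h1 : w i * z i = 0 := hg (Sum.inr i)
      have h2 := E3' i
      nlinarith
    funext s
    rcases s with j | (i | i)
    · exact congrFun hx0 j
    · exact hy0 i
    · exact hz0 i
  intro u v huv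
  have h0 : (Matrix.fromBlocks M (Matrix.fromCols Aᵀ (Cᵀ * Matrix.diagonal w))
      (Matrix.fromRows A C) (Matrix.fromBlocks 0 0 0 (Matrix.diagonal w - 1))) *ᵥ (u - v) = 0 := by
    rw [Matrix.mulVec_sub, huv, sub_self]
  exact sub_eq_zero.mp (key _ h0)
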